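/- Let α > 1 and fix t_s > 0. Then the function τ ↦ χ_s(τ) := ∫_{t_s}^{τ} (τ^α / t^α) · (τ^{2α} − t^{2α})^{−1/2} dt is strictly increasing on (t_s, ∞); equivalently, its derivative with respect to τ is positive for every τ > t_s. -/

import Mathlib

open Real MeasureTheory intervalIntegral Filter Set

noncomputable def gg (α : ℝ) (u : ℝ) : ℝ := u ^ (-α) * (1 - u ^ (2*α)) ^ (-(1:ℝ)/2)

lemma gg_meas (α : ℝ) : Measurable (gg α) := by
  unfold gg; measurability

lemma bound_int (x C : ℝ) : IntervalIntegrable (fun u : ℝ => C * (1-u) ^ (-(1:ℝ)/2)) volume x 1 := by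
  have h : IntervalIntegrable (fun t : ℝ => t ^ (-(1:ℝ)/2)) volume (1-x) (1-1) :=
    intervalIntegrable_rpow' (by norm_num)
  have h2 := h.comp_sub_left 1
  simp only [sub_sub_cancel] at h2
  exact h2.const_mul C

lemma one_sub_nonneg {α u : ℝ} (hα : 1 < α) (hu0 : 0 ≤ u) (hu1 : u ≤ 1) :
    0 ≤ 1 - u ^ (2*α) := by
  have := Real.rpow_le_one hu0 hu1 (by linarith : (0:ℝ) ≤ 2*α)
  linarith

lemma comp_le {α u : ℝ} (hα : 1 < α) (hu0 : 0 < u) (hu1 : u ≤ 1) :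
    (1 - u ^ (2*α)) ^ (-(1:ℝ)/2) ≤ (1-u) ^ (-(1:ℝ)/2) := by
  rcases eq_or_lt_of_le hu1 with h | h
  · subst h
    simp [Real.one_rpow]
  · have h2 : u ^ (2*α) ≤ u := by
      have := Real.rpow_le_rpow_of_exponent_ge hu0 hu1 (by linarith : (1:ℝ) ≤ 2*α)
      simpa using this
    exact Real.rpow_le_rpow_of_nonpos (by linarith) (by linarith) (by norm_num)

lemma gg_nonneg {α u : ℝ} (hα : 1 < α) (hu0 : 0 ≤ u) (hu1 : u ≤ 1) : 0 ≤ gg α u :=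
  mul_nonneg (Real.rpow_nonneg hu0 _) (Real.rpow_nonneg (one_sub_nonneg hα hu0 hu1) _)

lemma gg_int {α x : ℝ} (hα : 1 < α) (hx : 0 < x) (hx1 : x < 1) :
    IntervalIntegrable (gg α) volume x 1 := by
  apply (bound_int x (x ^ (-α))).mono_fun' ((gg_meas α).aestronglyMeasurable.restrict)
  filter_upwards [ae_restrict_mem measurableSet_uIoc] with u hu
  rw [uIoc_of_le hx1.le] at hu
  have hu0 : 0 < u := hx.trans hu.1
  have hgn : 0 ≤ gg α u := gg_nonneg hα hu0.le hu.2
  rw [Real.norm_of_nonneg hgn]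
  unfold gg
  apply mul_le_mul _ (comp_le hα hu0 hu.2) (Real.rpow_nonneg (one_sub_nonneg hα hu0.le hu.2) _)
    (Real.rpow_nonneg hx.le _)
  exact Real.rpow_le_rpow_of_nonpos hx hu.1.le (by linarith)

noncomputable def ph (α : ℝ) (u : ℝ) : ℝ := -(u ^ (1-α) * (1 - u ^ (2*α)) ^ ((1:ℝ)/2))

noncomputable def ph' (α : ℝ) (u : ℝ) : ℝ :=
  (α-1) * u ^ (-α) * (1 - u ^ (2*α)) ^ ((1:ℝ)/2) + α * u ^ α * (1 - u ^ (2*α)) ^ (-(1:ℝ)/2)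

lemma ph_hasDeriv {α u : ℝ} (hα : 1 < α) (hu0 : 0 < u) (hu1 : u < 1) :
    HasDerivAt (ph α) (ph' α u) u := by
  have hz : u ^ (2*α) < 1 := Real.rpow_lt_one hu0.le hu1 (by linarith)
  have hz0 : (0:ℝ) < 1 - u ^ (2*α) := by linarith
  have h1 : HasDerivAt (fun u : ℝ => u ^ (1-α)) ((1-α) * u ^ (1-α-1)) u :=
    Real.hasDerivAt_rpow_const (Or.inl hu0.ne')
  have h2 : HasDerivAt (fun u : ℝ => u ^ (2*α)) (2*α * u ^ (2*α-1)) u :=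
    Real.hasDerivAt_rpow_const (Or.inl hu0.ne')
  have h3 : HasDerivAt (fun u : ℝ => 1 - u ^ (2*α)) (-(2*α * u ^ (2*α-1))) u := by
    have := (hasDerivAt_const u (1:ℝ)).sub h2
    simp only [zero_sub] at this
    exact this
  have h4 := h3.rpow_const (p := (1:ℝ)/2) (Or.inl hz0.ne')
  have h5 := (h1.mul h4).neg
  refine HasDerivAt.congr_deriv (f := ph α) h5 ?_
  have e1 : u ^ (1-α-1) = u ^ (-α) := by norm_num
  have e2 : (1 - u ^ (2*α)) ^ ((1:ℝ)/2 - 1) = (1 - u ^ (2*α)) ^ (-(1:ℝ)/2) := by norm_num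
  have e3 : u ^ α = u ^ (1-α) * u ^ (2*α-1) := by
    rw [← Real.rpow_add hu0]; congr 1; ring
  rw [e1, e2]
  unfold ph'
  rw [e3]
  ring

lemma ph'_nonneg {α u : ℝ} (hα : 1 < α) (hu0 : 0 < u) (hu1 : u ≤ 1) : 0 ≤ ph' α u := by
  unfold ph'
  have h1 : (0:ℝ) ≤ 1 - u ^ (2*α) := one_sub_nonneg hα hu0.le hu1
  have a1 := Real.rpow_nonneg h1 ((1:ℝ)/2)
  have a2 := Real.rpow_nonneg h1 (-(1:ℝ)/2)
  have a3 := Real.rpow_nonneg hu0.le (-α)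
  have a4 := Real.rpow_nonneg hu0.le α
  have : (0:ℝ) ≤ α - 1 := by linarith
  have : (0:ℝ) ≤ α := by linarith
  apply add_nonneg
  · exact mul_nonneg (mul_nonneg (by linarith) a3) a1
  · exact mul_nonneg (mul_nonneg (by linarith) a4) a2

lemma ph'_meas (α : ℝ) : Measurable (ph' α) := by
  unfold ph'; measurability

lemma ph'_int {α x : ℝ} (hα : 1 < α) (hx : 0 < x) (hx1 : x < 1) :
    IntervalIntegrable (ph' α) volume x 1 := by
  have hb : IntervalIntegrable (fun u : ℝ => (α-1) * x ^ (-α) + α * (1-u) ^ (-(1:ℝ)/2))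
      volume x 1 := intervalIntegrable_const.add (bound_int x α)
  apply hb.mono_fun' ((ph'_meas α).aestronglyMeasurable.restrict)
  filter_upwards [ae_restrict_mem measurableSet_uIoc] with u hu
  rw [uIoc_of_le hx1.le] at hu
  have hu0 : 0 < u := hx.trans hu.1
  have h1 : (0:ℝ) ≤ 1 - u ^ (2*α) := one_sub_nonneg hα hu0.le hu.2
  rw [Real.norm_of_nonneg (ph'_nonneg hα hu0 hu.2)]
  unfold ph'
  have t1 : (α-1) * u ^ (-α) * (1 - u ^ (2*α)) ^ ((1:ℝ)/2) ≤ (α-1) * x ^ (-α) := by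
    have b1 : u ^ (-α) ≤ x ^ (-α) := Real.rpow_le_rpow_of_nonpos hx hu.1.le (by linarith)
    have hzn : (0:ℝ) ≤ u ^ (2*α) := Real.rpow_nonneg hu0.le _
    have b2 : (1 - u ^ (2*α)) ^ ((1:ℝ)/2) ≤ 1 := Real.rpow_le_one h1 (by linarith) (by norm_num)
    calc (α-1) * u ^ (-α) * (1 - u ^ (2*α)) ^ ((1:ℝ)/2) ≤ (α-1) * u ^ (-α) * 1 := by
          apply mul_le_mul_of_nonneg_left b2
          exact mul_nonneg (by linarith) (Real.rpow_nonneg hu0.le _)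
      _ ≤ (α-1) * x ^ (-α) := by
          rw [mul_one]; exact mul_le_mul_of_nonneg_left b1 (by linarith)
  have t2 : α * u ^ α * (1 - u ^ (2*α)) ^ (-(1:ℝ)/2) ≤ α * (1-u) ^ (-(1:ℝ)/2) := by
    have b1 : u ^ α ≤ 1 := Real.rpow_le_one hu0.le hu.2 (by linarith)
    have b2 := comp_le hα hu0 hu.2
    calc α * u ^ α * (1 - u ^ (2*α)) ^ (-(1:ℝ)/2)
        ≤ α * 1 * (1 - u ^ (2*α)) ^ (-(1:ℝ)/2) := by
          apply mul_le_mul_of_nonneg_right _ (Real.rpow_nonneg h1 _)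
          have : (0:ℝ) ≤ α := by linarith
          nlinarith [Real.rpow_nonneg hu0.le α]
      _ ≤ α * (1-u) ^ (-(1:ℝ)/2) := by
          rw [mul_one]; exact mul_le_mul_of_nonneg_left b2 (by linarith)
  linarith

lemma key_ineq {α x : ℝ} (hα : 1 < α) (hx : 0 < x) (hx1 : x < 1) :
    (α - 1) * ∫ u in x..(1:ℝ), gg α u ≤ x ^ (1-α) * (1 - x ^ (2*α)) ^ ((1:ℝ)/2) := by
  have hgint := gg_int hα hx hx1
  have hpint := ph'_int hα hx hx1
  have h2 : ∫ u in x..(1:ℝ), (α-1) * gg α u ≤ ∫ u in x..(1:ℝ), ph' α u := by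
    apply intervalIntegral.integral_mono_on hx1.le (hgint.const_mul _) hpint
    intro u hu
    have hu0 : 0 < u := hx.trans_le hu.1
    rcases eq_or_lt_of_le hu.2 with h | h
    · subst h
      unfold gg ph'
      simp [Real.one_rpow, Real.zero_rpow (by norm_num : -(1:ℝ)/2 ≠ 0),
        Real.zero_rpow (by norm_num : (1:ℝ)/2 ≠ 0)]
    · have hz : u ^ (2*α) < 1 := Real.rpow_lt_one hu0.le h (by linarith)
      have hz0 : (0:ℝ) < 1 - u ^ (2*α) := by linarith
      have e1 : (1 - u ^ (2*α)) ^ ((1:ℝ)/2) = (1 - u ^ (2*α)) * (1 - u ^ (2*α)) ^ (-(1:ℝ)/2) := by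
        rw [show (1:ℝ)/2 = 1 + (-(1:ℝ)/2) by norm_num, Real.rpow_add hz0, Real.rpow_one]
      have e2 : u ^ α = u ^ (-α) * u ^ (2*α) := by
        rw [← Real.rpow_add hu0]; congr 1; ring
      unfold gg ph'
      rw [e1, e2]
      have hzpos : 0 < u ^ (2*α) := Real.rpow_pos_of_pos hu0 _
      have hA : 0 ≤ u ^ (-α) := Real.rpow_nonneg hu0.le _
      have hB : 0 ≤ (1 - u ^ (2*α)) ^ (-(1:ℝ)/2) := Real.rpow_nonneg hz0.le _
      nlinarith [mul_nonneg hA hB, mul_nonneg (mul_nonneg hA hB) hzpos.le]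
  have h3 : ∫ u in x..(1:ℝ), ph' α u = ph α 1 - ph α x := by
    have hcont : ContinuousOn (ph α) (Icc x 1) := by
      apply ContinuousOn.neg
      apply ContinuousOn.mul
      · intro u hu
        exact (Real.continuousAt_rpow_const u (1-α)
          (Or.inl (ne_of_gt (hx.trans_le hu.1)))).continuousWithinAt
      · apply ContinuousOn.rpow_const
        · apply ContinuousOn.sub continuousOn_const
          intro u hu
          exact (Real.continuousAt_rpow_const u (2*α)
            (Or.inl (ne_of_gt (hx.trans_le hu.1)))).continuousWithinAt
        · intro u _; exact Or.inr (by norm_num)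
    exact intervalIntegral.integral_eq_sub_of_hasDeriv_right_of_le hx1.le hcont
      (fun u hu => (ph_hasDeriv hα (hx.trans hu.1) hu.2).hasDerivWithinAt) hpint
  have h4 : ph α 1 = 0 := by
    unfold ph
    simp [Real.one_rpow, Real.zero_rpow (by norm_num : (1:ℝ)/2 ≠ 0)]
  have h5 : ph α x = -(x ^ (1-α) * (1 - x ^ (2*α)) ^ ((1:ℝ)/2)) := rfl
  have hc : (α-1) * ∫ u in x..(1:ℝ), gg α u = ∫ u in x..(1:ℝ), (α-1) * gg α u :=
    (intervalIntegral.integral_const_mul _ _).symm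
  rw [hc]
  rw [h3, h4, h5] at h2
  linarith

lemma subst_eq {α ts τ : ℝ} (hα : 1 < α) (hts : 0 < ts) (hτ : ts < τ) :
    ∫ t in ts..τ, (τ ^ α / t ^ α) * (τ ^ (2 * α) - t ^ (2 * α)) ^ (-(1:ℝ) / 2)
      = τ ^ (1-α) * ∫ u in (ts/τ)..(1:ℝ), gg α u := by
  have hτ0 : 0 < τ := hts.trans hτ
  have hx1 : ts/τ < 1 := (div_lt_one hτ0).2 hτ
  have h1 := intervalIntegral.integral_comp_mul_left
    (fun t : ℝ => (τ ^ α / t ^ α) * (τ ^ (2 * α) - t ^ (2 * α)) ^ (-(1:ℝ) / 2)) hτ0.ne'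
    (a := ts/τ) (b := 1)
  rw [mul_one, mul_div_cancel₀ _ hτ0.ne'] at h1
  have h2 : ∀ u ∈ uIcc (ts/τ) (1:ℝ),
      (τ ^ α / (τ*u) ^ α) * (τ ^ (2 * α) - (τ*u) ^ (2 * α)) ^ (-(1:ℝ) / 2)
        = τ ^ (-α) * gg α u := by
    intro u hu
    rw [uIcc_of_le hx1.le] at hu
    have hu0 : 0 < u := lt_of_lt_of_le (div_pos hts hτ0) hu.1
    have e1 : (τ*u) ^ α = τ ^ α * u ^ α := Real.mul_rpow hτ0.le hu0.le
    have e2 : (τ*u) ^ (2*α) = τ ^ (2*α) * u ^ (2*α) := Real.mul_rpow hτ0.le hu0.le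
    have e3 : τ ^ (2*α) - τ ^ (2*α) * u ^ (2*α) = τ ^ (2*α) * (1 - u ^ (2*α)) := by ring
    have e4 : (τ ^ (2*α) * (1 - u ^ (2*α))) ^ (-(1:ℝ)/2)
        = (τ ^ (2*α)) ^ (-(1:ℝ)/2) * (1 - u ^ (2*α)) ^ (-(1:ℝ)/2) :=
      Real.mul_rpow (Real.rpow_nonneg hτ0.le _) (one_sub_nonneg hα hu0.le hu.2)
    have e5 : (τ ^ (2*α)) ^ (-(1:ℝ)/2) = τ ^ (-α) := by
      rw [← Real.rpow_mul hτ0.le]; congr 1; ring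
    have e6 : τ ^ α / (τ ^ α * u ^ α) = u ^ (-α) := by
      rw [Real.rpow_neg hu0.le]
      field_simp
    rw [e1, e2, e3, e4, e5, e6]
    unfold gg
    ring
  rw [intervalIntegral.integral_congr h2, intervalIntegral.integral_const_mul,
    smul_eq_mul] at h1
  beta_reduce at h1
  have h7 : ∫ t in ts..τ, τ ^ α / t ^ α * (τ ^ (2 * α) - t ^ (2 * α)) ^ (-(1:ℝ) / 2)
      = τ * (τ ^ (-α) * ∫ u in (ts/τ)..(1:ℝ), gg α u) := by
    rw [h1]; field_simp
  rw [h7, ← mul_assoc]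
  congr 1
  rw [show (1:ℝ) - α = 1 + (-α) by ring, Real.rpow_add hτ0, Real.rpow_one]

lemma main_hasDeriv {α ts τ : ℝ} (hα : 1 < α) (hts : 0 < ts) (hτ : ts < τ) :
    ∃ d : ℝ, 0 < d ∧ HasDerivAt (fun σ : ℝ =>
      ∫ t in ts..σ, (σ ^ α / t ^ α) * (σ ^ (2 * α) - t ^ (2 * α)) ^ (-(1:ℝ)/2)) d τ := by
  have hτ0 : 0 < τ := hts.trans hτ
  have hx0 : 0 < ts/τ := div_pos hts hτ0
  have hx1 : ts/τ < 1 := (div_lt_one hτ0).2 hτ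
  have hz : (ts/τ) ^ (2*α) < 1 := Real.rpow_lt_one hx0.le hx1 (by positivity)
  have hz0 : (0:ℝ) < 1 - (ts/τ) ^ (2*α) := by linarith
  have hgc : ContinuousAt (gg α) (ts/τ) := by
    have c1 : ContinuousAt (fun u : ℝ => u ^ (-α)) (ts/τ) :=
      Real.continuousAt_rpow_const _ (-α) (Or.inl hx0.ne')
    have c2 : ContinuousAt (fun u : ℝ => 1 - u ^ (2*α)) (ts/τ) :=
      continuousAt_const.sub (Real.continuousAt_rpow_const _ (2*α) (Or.inl hx0.ne'))
    exact c1.mul (c2.rpow_const (Or.inl hz0.ne'))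
  have hG : HasDerivAt (fun y : ℝ => ∫ u in (1:ℝ)..y, gg α u) (gg α (ts/τ)) (ts/τ) :=
    intervalIntegral.integral_hasDerivAt_right ((gg_int hα hx0 hx1).symm)
      ((gg_meas α).aestronglyMeasurable.stronglyMeasurableAtFilter) hgc
  have hinv : HasDerivAt (fun σ : ℝ => ts/σ) (ts * -(τ^2)⁻¹) τ := by
    have h := (hasDerivAt_inv hτ0.ne').const_mul ts
    simpa [div_eq_mul_inv] using h
  have hcomp : HasDerivAt (fun σ : ℝ => ∫ u in (1:ℝ)..(ts/σ), gg α u)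
      (gg α (ts/τ) * (ts * -(τ^2)⁻¹)) τ := by
    have := hG.comp τ hinv
    exact this
  have hpow : HasDerivAt (fun σ : ℝ => σ ^ (1-α)) ((1-α) * τ ^ (1-α-1)) τ :=
    Real.hasDerivAt_rpow_const (Or.inl hτ0.ne')
  have hPhi := (hpow.mul hcomp).neg
  have hsym : ∫ u in (1:ℝ)..(ts/τ), gg α u = -∫ u in (ts/τ)..(1:ℝ), gg α u :=
    intervalIntegral.integral_symm _ _
  rw [hsym] at hPhi
  set I : ℝ := ∫ u in (ts/τ)..(1:ℝ), gg α u with hIdef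
  refine ⟨_, ?_, hPhi.congr_of_eventuallyEq ?_⟩
  · -- positivity of the derivative value
    have e1 : τ ^ (1-α-1) = τ ^ (-α) := by norm_num
    have e2 : τ ^ (1-α) = τ * τ ^ (-α) := by
      rw [show (1:ℝ) - α = 1 + (-α) by ring, Real.rpow_add hτ0, Real.rpow_one]
    have hD : -((1-α) * τ ^ (1-α-1) * -I + τ ^ (1-α) * (gg α (ts/τ) * (ts * -(τ^2)⁻¹)))
        = τ ^ (-α) * ((ts/τ) * gg α (ts/τ) - (α-1) * I) := by
      rw [e1, e2]
      field_simp
      ring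
    rw [hD]
    have key := key_ineq hα hx0 hx1
    have strict : (ts/τ) ^ (1-α) * (1 - (ts/τ) ^ (2*α)) ^ ((1:ℝ)/2)
        < (ts/τ) ^ (1-α) * (1 - (ts/τ) ^ (2*α)) ^ (-(1:ℝ)/2) := by
      apply mul_lt_mul_of_pos_left _ (Real.rpow_pos_of_pos hx0 _)
      exact Real.rpow_lt_rpow_of_exponent_gt hz0
        (by nlinarith [Real.rpow_pos_of_pos hx0 (2*α)]) (by norm_num)
    have ex : (ts/τ) * gg α (ts/τ)
        = (ts/τ) ^ (1-α) * (1 - (ts/τ) ^ (2*α)) ^ (-(1:ℝ)/2) := by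
      unfold gg
      rw [← mul_assoc]
      congr 1
      rw [show (1:ℝ) - α = 1 + (-α) by ring, Real.rpow_add hx0, Real.rpow_one]
    apply mul_pos (Real.rpow_pos_of_pos hτ0 _)
    rw [ex]
    linarith
  · -- eventual equality
    filter_upwards [Ioi_mem_nhds hτ] with σ hσ
    rw [subst_eq hα hts hσ,
      intervalIntegral.integral_symm]
    simp only [Pi.neg_apply, Pi.mul_apply]
    ring

theorem chi_s_strictMono (α ts : ℝ) (hα : 1 < α) (hts : 0 < ts) :
    StrictMonoOn (fun τ : ℝ =>
        ∫ t in ts..τ, (τ ^ α / t ^ α) * (τ ^ (2 * α) - t ^ (2 * α)) ^ (-(1 : ℝ) / 2))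
      (Set.Ioi ts) ∧
    ∀ τ : ℝ, ts < τ →
      0 < deriv (fun τ : ℝ =>
        ∫ t in ts..τ, (τ ^ α / t ^ α) * (τ ^ (2 * α) - t ^ (2 * α)) ^ (-(1 : ℝ) / 2)) τ := by
  have hd : ∀ τ : ℝ, ts < τ → 0 < deriv (fun τ : ℝ =>
      ∫ t in ts..τ, (τ ^ α / t ^ α) * (τ ^ (2 * α) - t ^ (2 * α)) ^ (-(1 : ℝ) / 2)) τ := by
    intro τ hτ
    obtain ⟨d, hd, hF⟩ := main_hasDeriv hα hts hτ
    rw [hF.deriv]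
    exact hd
  refine ⟨?_, hd⟩
  apply strictMonoOn_of_deriv_pos (convex_Ioi ts)
  · intro τ hτ
    obtain ⟨d, _, hF⟩ := main_hasDeriv hα hts hτ
    exact hF.differentiableAt.continuousAt.continuousWithinAt
  · intro τ hτ
    rw [interior_Ioi] at hτ
    exact hd τ hτ
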